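/- For every positive integer k and all distinct x, t ∈ [-1,1] one has W_1'((t+x)/2) ≤ (W_1(t) - W_1(x))/(t - x) ≤ (π/√2)·W_1'((t+x)/2), where W_1'(s) = k/(π√(1-s²)). -/

import Mathlib

open Real

set_option maxHeartbeats 1000000 in
/-- Core estimate for `x < t`, in product form. -/
lemma aux_key (x t : ℝ) (hx1 : -1 ≤ x) (hx2 : x ≤ 1) (ht1 : -1 ≤ t) (ht2 : t ≤ 1)
    (hlt : x < t) :
    t - x ≤ Real.sqrt (1 - ((t + x) / 2) ^ 2) * (Real.arcsin t - Real.arcsin x) ∧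
    Real.sqrt (1 - ((t + x) / 2) ^ 2) * (Real.arcsin t - Real.arcsin x) ≤
      (π / Real.sqrt 2) * (t - x) := by
  set A := Real.arcsin t with hA
  set B := Real.arcsin x with hB
  set u := (A + B) / 2 with hu
  set v := (A - B) / 2 with hv
  have hA1 : -(π/2) ≤ A := Real.neg_pi_div_two_le_arcsin t
  have hA2 : A ≤ π/2 := Real.arcsin_le_pi_div_two t
  have hB1 : -(π/2) ≤ B := Real.neg_pi_div_two_le_arcsin x
  have hB2 : B ≤ π/2 := Real.arcsin_le_pi_div_two x
  have hBA : B < A := Real.strictMonoOn_arcsin ⟨hx1, hx2⟩ ⟨ht1, ht2⟩ hlt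
  have hv0 : 0 < v := by simp only [hv]; linarith
  have hvle : v ≤ π/2 := by simp only [hv]; linarith
  have hsinA : Real.sin A = t := Real.sin_arcsin ht1 ht2
  have hsinB : Real.sin B = x := Real.sin_arcsin hx1 hx2
  have hdiff : t - x = 2 * Real.sin v * Real.cos u := by
    rw [← hsinA, ← hsinB, Real.sin_sub_sin]
  have hsum : t + x = 2 * Real.sin u * Real.cos v := by
    have h := Real.sin_sub_sin A (-B)
    rw [Real.sin_neg] at h
    have e1 : (A - -B) / 2 = u := by simp only [hu]; ring
    have e2 : (A + -B) / 2 = v := by simp only [hv]; ring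
    rw [e1, e2] at h
    rw [← hsinA, ← hsinB]
    linarith
  have hm : (t + x) / 2 = Real.sin u * Real.cos v := by rw [hsum]; ring
  have hid : 1 - ((t + x) / 2) ^ 2 = Real.sin v ^ 2 + Real.cos u ^ 2 * Real.cos v ^ 2 := by
    rw [hm]
    nlinarith [Real.sin_sq_add_cos_sq u, Real.sin_sq_add_cos_sq v]
  have hsv : 0 < Real.sin v := Real.sin_pos_of_pos_of_lt_pi hv0 (by linarith [Real.pi_pos])
  have huabs : |u| ≤ π/2 - v := by
    rw [abs_le]
    constructor <;> simp only [hu, hv] at * <;> linarith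
  -- cos u ≥ sin v > 0
  have hcu : Real.sin v ≤ Real.cos u := by
    have h1 : Real.cos (π/2 - v) ≤ Real.cos |u| :=
      Real.cos_le_cos_of_nonneg_of_le_pi (abs_nonneg u)
        (by linarith [Real.pi_pos]) huabs
    rwa [Real.cos_pi_div_two_sub, Real.cos_abs] at h1
  have hcu0 : 0 < Real.cos u := lt_of_lt_of_le hsv hcu
  have hcv0 : 0 ≤ Real.cos v := Real.cos_nonneg_of_mem_Icc ⟨by linarith, hvle⟩
  have hsvv : Real.sin v ≤ v := le_of_lt (Real.sin_lt hv0)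
  have hAB : A - B = 2 * v := by simp only [hv]; ring
  -- cos u ≤ √(1 - m²)
  have hy : 0 ≤ 1 - ((t + x) / 2) ^ 2 := by rw [hid]; positivity
  have hle1 : Real.cos u ≤ Real.sqrt (1 - ((t + x) / 2) ^ 2) := by
    rw [Real.le_sqrt hcu0.le hy, hid]
    nlinarith [Real.sin_sq_add_cos_sq v, Real.sin_sq_add_cos_sq u,
      sq_nonneg (Real.sin u * Real.sin v)]
  -- √(1 - m²) ≤ √2 * cos u
  have hle2 : Real.sqrt (1 - ((t + x) / 2) ^ 2) ≤ Real.sqrt 2 * Real.cos u := by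
    have h1 : 1 - ((t + x) / 2) ^ 2 ≤ 2 * Real.cos u ^ 2 := by
      rw [hid]
      nlinarith [Real.cos_sq_le_one v, hcu, hsv.le, hcu0.le,
        mul_nonneg (sub_nonneg.mpr hcu) (by linarith : (0:ℝ) ≤ Real.cos u + Real.sin v),
        sq_nonneg (Real.cos u)]
    calc Real.sqrt (1 - ((t + x) / 2) ^ 2) ≤ Real.sqrt (2 * Real.cos u ^ 2) :=
          Real.sqrt_le_sqrt h1
      _ = Real.sqrt 2 * Real.cos u := by
          rw [Real.sqrt_mul (by norm_num), Real.sqrt_sq hcu0.le]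
  have hJordan : v ≤ π / 2 * Real.sin v := by
    have := Real.mul_le_sin hv0.le hvle
    have hπ := Real.pi_pos
    rw [div_mul_eq_mul_div, div_le_iff₀ hπ] at this
    nlinarith
  constructor
  · -- t - x = 2 sin v cos u ≤ 2 v cos u ≤ √(1-m²) * 2v
    rw [hdiff, hAB]
    have h1 : 2 * Real.sin v * Real.cos u ≤ 2 * v * Real.cos u := by
      nlinarith
    have h2 : 2 * v * Real.cos u ≤ Real.sqrt (1 - ((t + x) / 2) ^ 2) * (2 * v) := by
      nlinarith
    linarith
  · rw [hdiff, hAB]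
    have hs2 : (0:ℝ) < Real.sqrt 2 := by positivity
    have h2 : Real.sqrt 2 * Real.sqrt 2 = 2 := Real.mul_self_sqrt (by norm_num)
    have h1 : Real.sqrt (1 - ((t + x) / 2) ^ 2) * (2 * v) ≤
        Real.sqrt 2 * Real.cos u * (2 * v) := by nlinarith
    have h3 : Real.sqrt 2 * Real.cos u * (2 * v) ≤
        Real.sqrt 2 * Real.cos u * (2 * (π / 2 * Real.sin v)) := by
      apply mul_le_mul_of_nonneg_left (by linarith) (by positivity)
    have h4 : Real.sqrt 2 * Real.cos u * (2 * (π / 2 * Real.sin v)) =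
        π / Real.sqrt 2 * (2 * Real.sin v * Real.cos u) := by
      field_simp
      linear_combination (Real.sq_sqrt (show (0:ℝ) ≤ 2 by norm_num))
    linarith [h1, h3, h4.le, h4.ge]

/-- Quotient form for `x < t`. -/
lemma aux_quot (x t : ℝ) (hx1 : -1 ≤ x) (hx2 : x ≤ 1) (ht1 : -1 ≤ t) (ht2 : t ≤ 1)
    (hlt : x < t) :
    1 / Real.sqrt (1 - ((t + x) / 2) ^ 2) ≤ (Real.arcsin t - Real.arcsin x) / (t - x) ∧
    (Real.arcsin t - Real.arcsin x) / (t - x) ≤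
      π / Real.sqrt 2 * (1 / Real.sqrt (1 - ((t + x) / 2) ^ 2)) := by
  obtain ⟨h1, h2⟩ := aux_key x t hx1 hx2 ht1 ht2 hlt
  have hm2 : ((t + x) / 2) ^ 2 < 1 := by nlinarith
  have hs : 0 < Real.sqrt (1 - ((t + x) / 2) ^ 2) := Real.sqrt_pos.mpr (by linarith)
  have htx : 0 < t - x := by linarith
  have hs2 : (0:ℝ) < Real.sqrt 2 := by positivity
  constructor
  · rw [div_le_div_iff₀ hs htx]
    nlinarith
  · have heq : π / Real.sqrt 2 * (1 / Real.sqrt (1 - ((t + x) / 2) ^ 2)) =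
        π / (Real.sqrt 2 * Real.sqrt (1 - ((t + x) / 2) ^ 2)) := by ring
    rw [heq, div_le_div_iff₀ htx (by positivity)]
    have h5 : Real.sqrt 2 * (Real.sqrt (1 - ((t + x) / 2) ^ 2) *
        (Real.arcsin t - Real.arcsin x)) ≤ Real.sqrt 2 * (π / Real.sqrt 2 * (t - x)) :=
      mul_le_mul_of_nonneg_left h2 hs2.le
    have h6 : Real.sqrt 2 * (π / Real.sqrt 2 * (t - x)) = π * (t - x) := by
      field_simp
    nlinarith [h5, h6]

theorem stmt_2 (k : ℕ) (hk : 0 < k) (x t : ℝ)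
    (hx : x ∈ Set.Icc (-1:ℝ) 1) (ht : t ∈ Set.Icc (-1:ℝ) 1) (hxt : x ≠ t) :
    (k : ℝ) / (π * Real.sqrt (1 - ((t + x) / 2) ^ 2)) ≤
      ((k : ℝ) / π * Real.arccos (-t) - (k : ℝ) / π * Real.arccos (-x)) / (t - x) ∧
    ((k : ℝ) / π * Real.arccos (-t) - (k : ℝ) / π * Real.arccos (-x)) / (t - x) ≤
      (π / Real.sqrt 2) * ((k : ℝ) / (π * Real.sqrt (1 - ((t + x) / 2) ^ 2))) := by
  obtain ⟨hx1, hx2⟩ := hx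
  obtain ⟨ht1, ht2⟩ := ht
  have hπ := Real.pi_pos
  have hknn : (0:ℝ) ≤ (k:ℝ) / π := by positivity
  have hnum : (k : ℝ) / π * Real.arccos (-t) - (k : ℝ) / π * Real.arccos (-x) =
      (k : ℝ) / π * (Real.arcsin t - Real.arcsin x) := by
    rw [Real.arccos_neg, Real.arccos_neg, Real.arccos_eq_pi_div_two_sub_arcsin,
      Real.arccos_eq_pi_div_two_sub_arcsin]
    ring
  have hquot : ∀ s : ℝ,
      1 / s ≤ (Real.arcsin t - Real.arcsin x) / (t - x) →
      (Real.arcsin t - Real.arcsin x) / (t - x) ≤ π / Real.sqrt 2 * (1 / s) →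
      ((k : ℝ) / (π * s) ≤
        ((k : ℝ) / π * Real.arccos (-t) - (k : ℝ) / π * Real.arccos (-x)) / (t - x) ∧
      ((k : ℝ) / π * Real.arccos (-t) - (k : ℝ) / π * Real.arccos (-x)) / (t - x) ≤
        (π / Real.sqrt 2) * ((k : ℝ) / (π * s))) := by
    intro s hlo hhi
    constructor
    · have := mul_le_mul_of_nonneg_left hlo hknn
      calc (k : ℝ) / (π * s) = (k : ℝ) / π * (1 / s) := by ring
        _ ≤ (k : ℝ) / π * ((Real.arcsin t - Real.arcsin x) / (t - x)) := this
        _ = ((k : ℝ) / π * Real.arccos (-t) - (k : ℝ) / π * Real.arccos (-x)) / (t - x) := by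
            rw [hnum]; ring
    · have := mul_le_mul_of_nonneg_left hhi hknn
      calc ((k : ℝ) / π * Real.arccos (-t) - (k : ℝ) / π * Real.arccos (-x)) / (t - x)
          = (k : ℝ) / π * ((Real.arcsin t - Real.arcsin x) / (t - x)) := by
            rw [hnum]; ring
        _ ≤ (k : ℝ) / π * (π / Real.sqrt 2 * (1 / s)) := this
        _ = (π / Real.sqrt 2) * ((k : ℝ) / (π * s)) := by ring
  rcases lt_or_gt_of_ne hxt with hlt | hgt
  · obtain ⟨h1, h2⟩ := aux_quot x t hx1 hx2 ht1 ht2 hlt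
    exact hquot _ h1 h2
  · obtain ⟨h1, h2⟩ := aux_quot t x ht1 ht2 hx1 hx2 hgt
    have hmid : (x + t) / 2 = (t + x) / 2 := by ring
    rw [hmid] at h1 h2
    have hq : (Real.arcsin x - Real.arcsin t) / (x - t) =
        (Real.arcsin t - Real.arcsin x) / (t - x) := by
      rw [← neg_sub (Real.arcsin t), ← neg_sub t x, neg_div_neg_eq]
    rw [hq] at h1 h2
    exact hquot _ h1 h2
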